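/- In a network (connected hypergraph with source s and sink t), there is a linear ordering e_1, ..., e_p of the cutedges such that every s–t path traverses the cutedges in exactly this order. -/

import Mathlib

/-- A path in a hypergraph with vertex type `α` and hyperedges `E : ι → Set α`
(hyperedges are indexed, so multiplicities are allowed): an alternating sequence of
pairwise distinct vertices and pairwise distinct hyperedges, from `s` to `t`, each
consecutive pair of vertices lying in the connecting hyperedge. -/
structure HPath {α ι : Type*} (E : ι → Set α) (s t : α) where
  verts : List α
  edges : List ι
  nodup_verts : verts.Nodup
  nodup_edges : edges.Nodup
  len : verts.length = edges.length + 1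
  head : verts.head? = some s
  last : verts.getLast? = some t
  mem_left : ∀ i : Fin edges.length,
    verts.get ⟨i.1, by omega⟩ ∈ E (edges.get i)
  mem_right : ∀ i : Fin edges.length,
    verts.get ⟨i.1 + 1, by omega⟩ ∈ E (edges.get i)

/-- The hypergraph is connected: any two vertices are joined by a path. -/
def HConnected {α ι : Type*} (E : ι → Set α) : Prop :=
  ∀ x y : α, Nonempty (HPath E x y)

/-- A cutedge of the network `(E, s, t)`: a hyperedge lying on every `s`–`t` path. -/
def IsCutedge {α ι : Type*} (E : ι → Set α) (s t : α) (e : ι) : Prop :=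
  ∀ p : HPath E s t, e ∈ p.edges

section Walk
variable {α ι : Type*} {E : ι → Set α}

inductive HWalk (E : ι → Set α) : α → α → Type _
  | nil (a : α) : HWalk E a a
  | cons {b c : α} (a : α) (e : ι) (ha : a ∈ E e) (hb : b ∈ E e) (w : HWalk E b c) :
      HWalk E a c

namespace HWalk

def support : {a b : α} → HWalk E a b → List α
  | _, _, nil a => [a]
  | _, _, cons a _ _ _ w => a :: w.support

def edges : {a b : α} → HWalk E a b → List ι
  | _, _, nil _ => []
  | _, _, cons _ e _ _ w => e :: w.edges

@[simp] lemma support_nil (a : α) : (nil (E := E) a).support = [a] := rfl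
@[simp] lemma support_cons {b c : α} (a : α) (e : ι) (ha hb) (w : HWalk E b c) :
    (cons a e ha hb w).support = a :: w.support := rfl
@[simp] lemma edges_nil (a : α) : (nil (E := E) a).edges = [] := rfl
@[simp] lemma edges_cons {b c : α} (a : α) (e : ι) (ha hb) (w : HWalk E b c) :
    (cons a e ha hb w).edges = e :: w.edges := rfl

lemma support_ne_nil {a b : α} (w : HWalk E a b) : w.support ≠ [] := by
  cases w <;> simp

lemma length_support {a b : α} (w : HWalk E a b) :
    w.support.length = w.edges.length + 1 := by
  induction w with
  | nil a => simp
  | cons a e ha hb w ih => simp [ih]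

lemma head?_support {a b : α} (w : HWalk E a b) : w.support.head? = some a := by
  cases w <;> rfl

lemma getLast?_support {a b : α} (w : HWalk E a b) : w.support.getLast? = some b := by
  induction w with
  | nil a => rfl
  | cons a e ha hb w ih =>
      rw [support_cons, List.getLast?_cons, ih]
      simp

lemma getElem_zero_support {a b : α} (w : HWalk E a b) (h : 0 < w.support.length) :
    w.support[0] = a := by
  cases w <;> rfl

lemma mem_left_getElem {a b : α} (w : HWalk E a b) (i : ℕ) (hi : i < w.edges.length) :
    w.support[i]'(by rw [w.length_support]; omega) ∈ E (w.edges[i]) := by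
  induction w generalizing i with
  | nil a => simp at hi
  | cons a e ha hb w ih =>
      match i with
      | 0 => exact ha
      | (n+1) =>
          simp only [support_cons, edges_cons, List.getElem_cons_succ]
          exact ih n (by simpa using hi)

lemma mem_right_getElem {a b : α} (w : HWalk E a b) (i : ℕ) (hi : i < w.edges.length) :
    w.support[i + 1]'(by rw [w.length_support]; omega) ∈ E (w.edges[i]) := by
  induction w generalizing i with
  | nil a => simp at hi
  | cons a e ha hb w ih =>
      match i with
      | 0 =>
          simp only [support_cons, edges_cons, List.getElem_cons_succ]
          rw [getElem_zero_support]
          exact hb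
      | (n+1) =>
          simp only [support_cons, edges_cons, List.getElem_cons_succ]
          exact ih n (by simpa using hi)

def append : {a b c : α} → HWalk E a b → HWalk E b c → HWalk E a c
  | _, _, _, nil _, w' => w'
  | _, _, _, cons a e ha hb w, w' => cons a e ha hb (w.append w')

@[simp] lemma edges_append : ∀ {a b c : α} (w : HWalk E a b) (w' : HWalk E b c),
    (w.append w').edges = w.edges ++ w'.edges
  | _, _, _, nil _, w' => rfl
  | _, _, _, cons a e ha hb w, w' => by
      show e :: (w.append w').edges = _
      rw [edges_append w w']; rfl

/-- drop until a vertex -/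
lemma exists_dropUntil {a b : α} (w : HWalk E a b) (x : α) (hx : x ∈ w.support) :
    ∃ w' : HWalk E x b, w'.edges.Sublist w.edges ∧ w'.support.Sublist w.support := by
  induction w with
  | nil a =>
      simp only [support_nil, List.mem_singleton] at hx
      subst hx
      exact ⟨nil x, by simp⟩
  | cons a e ha hb w ih =>
      rcases eq_or_ne x a with rfl | hne
      · exact ⟨cons x e ha hb w, by simp⟩
      · have hx' : x ∈ w.support := by
          rcases List.mem_cons.1 hx with h | h
          · exact absurd h hne
          · exact h
        obtain ⟨w', h1, h2⟩ := ih hx'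
        exact ⟨w', h1.trans (List.sublist_cons_self _ _),
          h2.trans (List.sublist_cons_self _ _)⟩

/-- bypass: vertex-nodup walk -/
lemma exists_bypass {a b : α} (w : HWalk E a b) :
    ∃ w' : HWalk E a b, w'.support.Nodup ∧ w'.edges.Sublist w.edges := by
  induction w with
  | nil a => exact ⟨nil a, by simp, by simp⟩
  | cons a e ha hb w ih =>
      obtain ⟨w', hnd, hsub⟩ := ih
      by_cases hmem : a ∈ w'.support
      · obtain ⟨w'', h1, h2⟩ := exists_dropUntil w' a hmem
        exact ⟨w'', h2.nodup hnd, (h1.trans hsub).trans (List.sublist_cons_self _ _)⟩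
      · refine ⟨cons a e ha hb w', ?_, ?_⟩
        · simpa [hmem] using hnd
        · exact hsub.cons₂ e

/-- drop through first occurrence of an edge -/
lemma exists_dropEdge {a b : α} (w : HWalk E a b) (e : ι) (he : e ∈ w.edges) :
    ∃ (c : α) (w' : HWalk E c b), c ∈ E e ∧ (e :: w'.edges).Sublist w.edges ∧
      w'.support.Sublist w.support := by
  induction w with
  | nil a => simp at he
  | cons a e' ha hb w ih =>
      rcases eq_or_ne e' e with rfl | hne
      · exact ⟨_, w, hb, by simp, List.sublist_cons_self _ _⟩
      · have he' : e ∈ w.edges := by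
          rcases List.mem_cons.1 he with h | h
          · exact absurd h.symm hne
          · exact h
        obtain ⟨c, w', h1, h2, h3⟩ := ih he'
        exact ⟨c, w', h1, h2.trans (List.sublist_cons_self _ _),
          h3.trans (List.sublist_cons_self _ _)⟩

lemma exists_dedupEdges {a b : α} (w : HWalk E a b) :
    ∃ w' : HWalk E a b, w'.support.Sublist w.support ∧ w'.edges.Nodup ∧
      w'.edges.Sublist w.edges := by
  induction w with
  | nil a => exact ⟨nil a, by simp, by simp, by simp⟩
  | cons a e ha hb w ih =>
      obtain ⟨w', hsup, hnd, hsub⟩ := ih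
      by_cases hmem : e ∈ w'.edges
      · obtain ⟨c, w'', hc, h2, h3⟩ := exists_dropEdge w' e hmem
        refine ⟨cons a e ha hc w'', ?_, ?_, ?_⟩
        · exact (h3.trans hsup).cons₂ a
        · have : (e :: w''.edges).Sublist w'.edges := h2
          exact this.nodup hnd
        · exact ((h2.trans hsub).trans (List.sublist_cons_self _ _)).trans
            (by exact List.Sublist.refl _)
      · refine ⟨cons a e ha hb w', hsup.cons₂ a, by simpa [hmem] using hnd, hsub.cons₂ e⟩

lemma exists_simple {a b : α} (w : HWalk E a b) :
    ∃ w' : HWalk E a b, w'.support.Nodup ∧ w'.edges.Nodup ∧ w'.edges ⊆ w.edges := by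
  obtain ⟨w1, h1, h2⟩ := exists_bypass w
  obtain ⟨w2, h3, h4, h5⟩ := exists_dedupEdges w1
  exact ⟨w2, h3.nodup h1, h4, fun x hx => h2.subset (h5.subset hx)⟩

/-- a walk with nodup support and edges yields an HPath with the same edges -/
lemma exists_toHPath {a b : α} (w : HWalk E a b) (h1 : w.support.Nodup)
    (h2 : w.edges.Nodup) : ∃ p : HPath E a b, p.edges = w.edges := by
  refine ⟨⟨w.support, w.edges, h1, h2, w.length_support, w.head?_support,
    w.getLast?_support, ?_, ?_⟩, rfl⟩
  · intro i
    simpa [List.get_eq_getElem] using w.mem_left_getElem i.1 i.2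
  · intro i
    simpa [List.get_eq_getElem] using w.mem_right_getElem i.1 i.2

end HWalk

/-- every s-t walk yields an s-t path with edges among the walk's edges -/
lemma exists_path_of_walk {a b : α} (w : HWalk E a b) :
    ∃ p : HPath E a b, p.edges ⊆ w.edges := by
  obtain ⟨w', h1, h2, h3⟩ := w.exists_simple
  obtain ⟨p, hp⟩ := w'.exists_toHPath h1 h2
  exact ⟨p, hp ▸ h3⟩

end Walk

section OfLists
variable {α ι : Type*} {E : ι → Set α}

lemma exists_walk_ofLists (ed : List ι) :
    ∀ (v : List α) (a b : α) (hlen : v.length = ed.length + 1),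
    v.head? = some a → v.getLast? = some b →
    (∀ (i : ℕ) (h : i < ed.length), v[i]'(by omega) ∈ E (ed[i])) →
    (∀ (i : ℕ) (h : i < ed.length), v[i+1]'(by omega) ∈ E (ed[i])) →
    ∃ w : HWalk E a b, w.edges = ed := by
  induction ed with
  | nil =>
      rintro (_ | ⟨x, (_ | ⟨y, v⟩)⟩) a b hlen hhead hlast hl hr
      · simp at hlen
      · have hxa : x = a := by simpa using hhead
        have hxb : x = b := by simpa using hlast
        subst hxa; subst hxb
        exact ⟨HWalk.nil x, rfl⟩
      · simp at hlen
  | cons e ed ih =>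
      rintro (_ | ⟨x, (_ | ⟨y, v⟩)⟩) a b hlen hhead hlast hl hr
      · simp at hlen
      · simp at hlen
      · have hxa : x = a := by simpa using hhead
        subst hxa
        have hlast' : (y :: v).getLast? = some b := by
          rwa [List.getLast?_cons_cons] at hlast
        have hlen' : (y :: v).length = ed.length + 1 := by
          simpa using hlen
        obtain ⟨w, hw⟩ := ih (y :: v) y b hlen' rfl hlast'
          (fun i h => hl (i+1) (by simp only [List.length_cons]; omega))
          (fun i h => hr (i+1) (by simp only [List.length_cons]; omega))
        refine ⟨HWalk.cons _ e (hl 0 (by simp only [List.length_cons]; omega)) ?_ w, ?_⟩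
        · have := hr 0 (by simp only [List.length_cons]; omega)
          simpa using this
        · rw [HWalk.edges_cons, hw]

variable {s t : α}

/-- prefix of a path up to (and excluding) the edge at index k -/
lemma exists_prefix_walk (p : HPath E s t) (k : ℕ) (hk : k < p.edges.length) :
    ∃ w : HWalk E s (p.verts[k]'(by rw [p.len]; omega)), w.edges = p.edges.take k := by
  have hlen := p.len
  have h1 : (p.verts.take (k+1)).length = (p.edges.take k).length + 1 := by
    simp; omega
  have h2 : (p.verts.take (k+1)).head? = some s := by
    have hh := p.head
    cases hv : p.verts with
    | nil => simp [hv] at hlen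
    | cons x l =>
        rw [hv] at hh
        simpa using hh
  have h3 : (p.verts.take (k+1)).getLast? = some (p.verts[k]'(by omega)) := by
    rw [List.getLast?_eq_getElem?]
    have hl : (p.verts.take (k+1)).length = k + 1 := by simp; omega
    rw [hl]
    simp only [Nat.add_sub_cancel]
    rw [List.getElem?_take]
    simp only [Nat.lt_succ_self, if_true]
    rw [List.getElem?_eq_getElem (by omega)]
  have h4 : ∀ (i : ℕ) (h : i < (p.edges.take k).length),
      (p.verts.take (k+1))[i]'(by omega) ∈ E ((p.edges.take k)[i]) := by
    intro i h
    simp only [List.length_take, lt_min_iff] at h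
    have h' : i < p.edges.length := by omega
    have := p.mem_left ⟨i, h'⟩
    simp only [List.get_eq_getElem] at this
    rw [List.getElem_take, List.getElem_take]
    exact this
  have h5 : ∀ (i : ℕ) (h : i < (p.edges.take k).length),
      (p.verts.take (k+1))[i+1]'(by omega) ∈ E ((p.edges.take k)[i]) := by
    intro i h
    simp only [List.length_take, lt_min_iff] at h
    have h' : i < p.edges.length := by omega
    have := p.mem_right ⟨i, h'⟩
    simp only [List.get_eq_getElem] at this
    rw [List.getElem_take, List.getElem_take]
    exact this
  exact exists_walk_ofLists _ _ _ _ h1 h2 h3 h4 h5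

/-- suffix of a path after the edge at index k -/
lemma exists_suffix_walk (p : HPath E s t) (k : ℕ) (hk : k < p.edges.length) :
    ∃ w : HWalk E (p.verts[k+1]'(by rw [p.len]; omega)) t,
      w.edges = p.edges.drop (k+1) := by
  have hlen := p.len
  have h1 : (p.verts.drop (k+1)).length = (p.edges.drop (k+1)).length + 1 := by
    simp; omega
  have h2 : (p.verts.drop (k+1)).head? = some (p.verts[k+1]'(by omega)) := by
    rw [List.head?_drop, List.getElem?_eq_getElem (by omega)]
  have h3 : (p.verts.drop (k+1)).getLast? = some t := by
    rw [List.getLast?_eq_getElem?]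
    have hl : (p.verts.drop (k+1)).length = p.verts.length - (k+1) := by simp
    rw [hl, List.getElem?_drop]
    have heq : k + 1 + (p.verts.length - (k+1) - 1) = p.verts.length - 1 := by omega
    rw [heq, ← List.getLast?_eq_getElem?]
    exact p.last
  have h4 : ∀ (i : ℕ) (h : i < (p.edges.drop (k+1)).length),
      (p.verts.drop (k+1))[i]'(by omega) ∈ E ((p.edges.drop (k+1))[i]) := by
    intro i h
    simp only [List.length_drop] at h
    have h' : k + 1 + i < p.edges.length := by omega
    have := p.mem_left ⟨k+1+i, h'⟩
    simp only [List.get_eq_getElem] at this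
    rw [List.getElem_drop, List.getElem_drop]
    exact this
  have h5 : ∀ (i : ℕ) (h : i < (p.edges.drop (k+1)).length),
      (p.verts.drop (k+1))[i+1]'(by omega) ∈ E ((p.edges.drop (k+1))[i]) := by
    intro i h
    simp only [List.length_drop] at h
    have h' : k + 1 + i < p.edges.length := by omega
    have := p.mem_right ⟨k+1+i, h'⟩
    simp only [List.get_eq_getElem] at this
    rw [List.getElem_drop, List.getElem_drop]
    exact this
  exact exists_walk_ofLists _ _ _ _ h1 h2 h3 h4 h5

end OfLists

section Before
variable {β : Type*}

def ListBefore (l : List β) (x y : β) : Prop :=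
  ∃ (i j : ℕ) (hi : i < l.length) (hj : j < l.length), i < j ∧ l[i] = x ∧ l[j] = y

lemma listBefore_cons_iff {a x y : β} {l : List β} :
    ListBefore (a :: l) x y ↔ (x = a ∧ y ∈ l) ∨ ListBefore l x y := by
  constructor
  · rintro ⟨i, j, hi, hj, hij, hx, hy⟩
    match i, j with
    | 0, (m+1) =>
        left
        refine ⟨hx.symm, ?_⟩
        rw [List.getElem_cons_succ] at hy
        exact hy ▸ List.getElem_mem _
    | (k+1), (m+1) =>
        right
        rw [List.getElem_cons_succ] at hx
        rw [List.getElem_cons_succ] at hy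
        exact ⟨k, m, by simpa using hi, by simpa using hj, by omega, hx, hy⟩
  · rintro (⟨rfl, hy⟩ | ⟨i, j, hi, hj, hij, hx, hy⟩)
    · obtain ⟨j, hj, hyj⟩ := List.mem_iff_getElem.1 hy
      exact ⟨0, j+1, by simp, by simpa using hj, by omega, rfl, by simpa using hyj⟩
    · exact ⟨i+1, j+1, by simpa using hi, by simpa using hj, by omega,
        by simpa using hx, by simpa using hy⟩

lemma ListBefore.mem_left {l : List β} {x y : β} (h : ListBefore l x y) : x ∈ l := by
  obtain ⟨i, j, hi, hj, hij, hx, hy⟩ := h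
  exact hx ▸ List.getElem_mem _

lemma ListBefore.mem_right {l : List β} {x y : β} (h : ListBefore l x y) : y ∈ l := by
  obtain ⟨i, j, hi, hj, hij, hx, hy⟩ := h
  exact hy ▸ List.getElem_mem _

lemma ListBefore.of_sublist {l' l : List β} {x y : β} (hs : l'.Sublist l)
    (h : ListBefore l' x y) : ListBefore l x y := by
  induction hs with
  | slnil => exact h
  | cons a hs ih =>
      rw [listBefore_cons_iff]
      exact Or.inr (ih h)
  | cons_cons a hs ih =>
      rw [listBefore_cons_iff] at h ⊢
      rcases h with ⟨rfl, hy⟩ | h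
      · exact Or.inl ⟨rfl, hs.subset hy⟩
      · exact Or.inr (ih h)

lemma listBefore_trichotomy {l : List β} {x y : β} (hx : x ∈ l) (hy : y ∈ l)
    (hne : x ≠ y) : ListBefore l x y ∨ ListBefore l y x := by
  obtain ⟨i, hi, hxi⟩ := List.mem_iff_getElem.1 hx
  obtain ⟨j, hj, hyj⟩ := List.mem_iff_getElem.1 hy
  rcases lt_trichotomy i j with h | h | h
  · exact Or.inl ⟨i, j, hi, hj, h, hxi, hyj⟩
  · exact absurd (hxi ▸ hyj ▸ h ▸ rfl) hne
  · exact Or.inr ⟨j, i, hj, hi, h, hyj, hxi⟩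

lemma ListBefore.ne {l : List β} {x y : β} (hnd : l.Nodup) (h : ListBefore l x y) :
    x ≠ y := by
  obtain ⟨i, j, hi, hj, hij, hx, hy⟩ := h
  rintro rfl
  exact absurd (hnd.getElem_inj_iff.1 (hx.trans hy.symm)) (by omega)

lemma ListBefore.asymm {l : List β} {x y : β} (hnd : l.Nodup)
    (h : ListBefore l x y) (h' : ListBefore l y x) : False := by
  obtain ⟨i, j, hi, hj, hij, hx, hy⟩ := h
  obtain ⟨i', j', hi', hj', hij', hy', hx'⟩ := h'
  have e1 : i = j' := hnd.getElem_inj_iff.1 (hx.trans hx'.symm)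
  have e2 : j = i' := hnd.getElem_inj_iff.1 (hy.trans hy'.symm)
  omega

lemma ListBefore.of_sublist_rev {l' l : List β} {x y : β} (hs : l'.Sublist l)
    (hnd : l.Nodup) (hx : x ∈ l') (hy : y ∈ l') (h : ListBefore l x y) :
    ListBefore l' x y := by
  have hne : x ≠ y := h.ne hnd
  rcases listBefore_trichotomy hx hy hne with h' | h'
  · exact h'
  · exact absurd (h'.of_sublist hs) (fun h'' => h.asymm hnd h'')

lemma eq_of_listBefore : ∀ (l₁ l₂ : List β), l₁.Nodup → l₂.Nodup →
    (∀ x, x ∈ l₁ ↔ x ∈ l₂) → (∀ x y, ListBefore l₁ x y → ListBefore l₂ x y) →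
    l₁ = l₂ := by
  intro l₁
  induction l₁ with
  | nil =>
      intro l₂ _ _ hm _
      symm
      rw [List.eq_nil_iff_forall_not_mem]
      exact fun x hx => by simpa using (hm x).2 hx
  | cons a l ih =>
      intro l₂ h₁ h₂ hm hb
      have ha2 : a ∈ l₂ := (hm a).1 (List.mem_cons_self (a := a) (l := l))
      obtain ⟨b, l₂', rfl⟩ : ∃ b l₂', l₂ = b :: l₂' := by
        cases l₂ with
        | nil => simp at ha2
        | cons b l₂' => exact ⟨b, l₂', rfl⟩
      have hba : a = b := by
        by_contra hne
        have hb1 : b ∈ l := by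
          have := (hm b).2 (List.mem_cons_self (a := b) (l := l₂'))
          rcases List.mem_cons.1 this with h | h
          · exact absurd h.symm hne
          · exact h
        have hab : ListBefore (a :: l) a b := listBefore_cons_iff.2 (Or.inl ⟨rfl, hb1⟩)
        have := hb a b hab
        rcases listBefore_cons_iff.1 this with ⟨hab', _⟩ | h'
        · exact hne hab'
        · exact absurd h'.mem_right (by simpa using (List.nodup_cons.1 h₂).1)
      subst hba
      have hal : a ∉ l := (List.nodup_cons.1 h₁).1
      congr 1
      apply ih l₂' (List.nodup_cons.1 h₁).2 (List.nodup_cons.1 h₂).2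
      · intro x
        constructor
        · intro hx
          have hxa : x ≠ a := fun h => hal (h ▸ hx)
          have := (hm x).1 (List.mem_cons_of_mem a hx)
          rcases List.mem_cons.1 this with h | h
          · exact absurd h hxa
          · exact h
        · intro hx
          have hxa : x ≠ a := fun h => (List.nodup_cons.1 h₂).1 (h ▸ hx)
          have := (hm x).2 (List.mem_cons_of_mem a hx)
          rcases List.mem_cons.1 this with h | h
          · exact absurd h hxa
          · exact h
      · intro x y hxy
        have := hb x y (listBefore_cons_iff.2 (Or.inr hxy))
        rcases listBefore_cons_iff.1 this with ⟨rfl, _⟩ | h'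
        · exact absurd hxy.mem_left hal
        · exact h'

end Before

section Main
variable {α ι : Type*} {E : ι → Set α} {s t : α}

lemma cutedge_before_trans (p q : HPath E s t) {e f : ι}
    (he : IsCutedge E s t e) (hfq : f ∈ q.edges)
    (h : ListBefore p.edges e f) : ListBefore q.edges e f := by
  have hne : e ≠ f := h.ne p.nodup_edges
  have heq : e ∈ q.edges := he q
  rcases listBefore_trichotomy heq hfq hne with h' | h'
  · exact h'
  exfalso
  obtain ⟨i, j, hi, hj, hij, hei, hfj⟩ := h
  obtain ⟨j', i', hj', hi', hlt, hfj', hei'⟩ := h'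
  obtain ⟨w1, hw1⟩ := exists_prefix_walk q j' hj'
  obtain ⟨w2, hw2⟩ := exists_suffix_walk p j hj
  have hu : (q.verts[j']'(by rw [q.len]; omega)) ∈ E f := by
    have := q.mem_left ⟨j', hj'⟩
    simp only [List.get_eq_getElem] at this
    rwa [hfj'] at this
  have hy : (p.verts[j+1]'(by rw [p.len]; omega)) ∈ E f := by
    have := p.mem_right ⟨j, hj⟩
    simp only [List.get_eq_getElem] at this
    rwa [hfj] at this
  obtain ⟨p', hp'⟩ := exists_path_of_walk (w1.append (HWalk.cons _ f hu hy w2))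
  have hmem : e ∈ (w1.append (HWalk.cons _ f hu hy w2)).edges := hp' (he p')
  rw [HWalk.edges_append, HWalk.edges_cons, hw1, hw2] at hmem
  rcases List.mem_append.1 hmem with hm | hm
  · obtain ⟨m, hmlt, hme⟩ := List.mem_iff_getElem.1 hm
    rw [List.getElem_take] at hme
    have hmi : m = i' := q.nodup_edges.getElem_inj_iff.1 (hme.trans hei'.symm)
    simp only [List.length_take, lt_min_iff] at hmlt
    omega
  · rcases List.mem_cons.1 hm with hm | hm
    · exact hne hm
    · obtain ⟨m, hmlt, hme⟩ := List.mem_iff_getElem.1 hm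
      rw [List.getElem_drop] at hme
      have hmi : j + 1 + m = i := p.nodup_edges.getElem_inj_iff.1 (hme.trans hei.symm)
      omega

end Main

/-- in a finite connected network with source `s` and sink `t`, there is a
linear ordering `l` of the cutedges such that every `s`–`t` path traverses the cutedges
in exactly this order. -/
theorem exists_cutedge_order {α ι : Type*} [Fintype α] [Fintype ι] [DecidableEq ι]
    (E : ι → Set α) (s t : α) (hst : s ≠ t) (hconn : HConnected E) :
    ∃ l : List ι, l.Nodup ∧ (∀ e : ι, e ∈ l ↔ IsCutedge E s t e) ∧
      ∀ p : HPath E s t, p.edges.filter (fun e => decide (e ∈ l)) = l := by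
  classical
  obtain ⟨p₀⟩ := hconn s t
  set l : List ι := p₀.edges.filter (fun e => decide (IsCutedge E s t e)) with hl
  have hmemiff : ∀ (pp : HPath E s t) (x : ι),
      x ∈ pp.edges.filter (fun e => decide (IsCutedge E s t e)) ↔ IsCutedge E s t x := by
    intro pp x
    simp only [List.mem_filter, decide_eq_true_eq]
    exact ⟨fun h => h.2, fun h => ⟨h pp, h⟩⟩
  refine ⟨l, p₀.nodup_edges.filter _, fun e => hmemiff p₀ e, ?_⟩
  intro p
  have hcongr : p.edges.filter (fun e => decide (e ∈ l)) =
      p.edges.filter (fun e => decide (IsCutedge E s t e)) := by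
    apply List.filter_congr
    intro a _
    exact decide_eq_decide.2 (hmemiff p₀ a)
  rw [hcongr, hl]
  apply eq_of_listBefore _ _ (p.nodup_edges.filter _) (p₀.nodup_edges.filter _)
  · intro x
    rw [hmemiff p x, hmemiff p₀ x]
  · intro x y hxy
    have hx : IsCutedge E s t x := (hmemiff p x).1 hxy.mem_left
    have hy : IsCutedge E s t y := (hmemiff p y).1 hxy.mem_right
    have h1 : ListBefore p.edges x y := hxy.of_sublist List.filter_sublist
    have h2 : ListBefore p₀.edges x y := cutedge_before_trans p p₀ hx (hy p₀) h1
    exact h2.of_sublist_rev List.filter_sublist p₀.nodup_edges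
      ((hmemiff p₀ x).2 hx) ((hmemiff p₀ y).2 hy)
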